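/- Let A ∈ ℝ^{m×n}, C a submatrix of k columns of A, R a submatrix of k rows of A, and M = C† A R†. Then ‖A − C M R‖₂ ≤ ‖(I − C C†) A‖₂ + ‖A (I − R† R)‖₂. -/

import Mathlib

open Matrix

/-- Spectral norm (operator 2-norm) of a real matrix. -/
noncomputable def spec {m n : ℕ} (A : Matrix (Fin m) (Fin n) ℝ) : ℝ :=
  ‖LinearMap.toContinuousLinearMap (Matrix.toEuclideanLin A)‖

/-- A selection matrix: columns of the identity matrix indexed by distinct indices. -/
def IsSelection {m k : ℕ} (P : Matrix (Fin m) (Fin k) ℝ) : Prop :=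
  ∃ p : Fin k → Fin m, Function.Injective p ∧
    P = Matrix.of fun i j => if i = p j then (1 : ℝ) else 0

/-- Moore–Penrose pseudoinverse, characterized by the four Penrose conditions. -/
def IsMoorePenrose {m n : ℕ} (A : Matrix (Fin m) (Fin n) ℝ)
    (Ap : Matrix (Fin n) (Fin m) ℝ) : Prop :=
  A * Ap * A = A ∧ Ap * A * Ap = Ap ∧ (A * Ap)ᵀ = A * Ap ∧ (Ap * A)ᵀ = Ap * A

lemma toEuclideanLin_mul {a b c : ℕ} (A : Matrix (Fin a) (Fin b) ℝ)
    (B : Matrix (Fin b) (Fin c) ℝ) :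
    Matrix.toEuclideanLin (A * B) =
      (Matrix.toEuclideanLin A).comp (Matrix.toEuclideanLin B) := by
  ext v
  simp [Matrix.toEuclideanLin_apply, Matrix.mulVec_mulVec]

lemma spec_add_le {a b : ℕ} (A B : Matrix (Fin a) (Fin b) ℝ) :
    spec (A + B) ≤ spec A + spec B := by
  unfold spec
  rw [map_add, map_add]
  exact norm_add_le _ _

lemma proj_norm_apply_le {d : ℕ} (Q : Matrix (Fin d) (Fin d) ℝ)
    (hsym : Qᵀ = Q) (hid : Q * Q = Q) (y : EuclideanSpace ℝ (Fin d)) :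
    ‖Matrix.toEuclideanLin Q y‖ ≤ ‖y‖ := by
  set T := Matrix.toEuclideanLin Q with hT
  have hH : Qᴴ = Q := by
    rw [Matrix.conjTranspose]
    ext i j
    simpa using congrFun (congrFun hsym i) j
  have hadj : LinearMap.adjoint T = T := by
    rw [← Matrix.toEuclideanLin_conjTranspose_eq_adjoint, hH]
  have hT2 : T (T y) = T y := by
    have := congrFun (congrArg DFunLike.coe (toEuclideanLin_mul Q Q)) y
    rw [hid] at this
    simpa [← hT] using this.symm
  have key : ‖T y‖ ^ 2 ≤ ‖y‖ * ‖T y‖ := by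
    have h1 : (inner ℝ (T y) (T y) : ℝ) = inner ℝ y (T y) := by
      calc (inner ℝ (T y) (T y) : ℝ) = inner ℝ y (LinearMap.adjoint T (T y)) := by
            rw [LinearMap.adjoint_inner_right]
        _ = inner ℝ y (T y) := by rw [hadj, hT2]
    calc ‖T y‖ ^ 2 = inner ℝ (T y) (T y) := by
          rw [real_inner_self_eq_norm_sq]
      _ = inner ℝ y (T y) := h1
      _ ≤ ‖y‖ * ‖T y‖ := real_inner_le_norm _ _
  rcases eq_or_lt_of_le (norm_nonneg (T y)) with h0 | h0
  · rw [← h0]; exact norm_nonneg y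
  · have := le_div_iff₀ h0 |>.mpr (by nlinarith [key] : ‖T y‖ * ‖T y‖ ≤ ‖y‖ * ‖T y‖)
    nlinarith [key, h0]

lemma spec_proj_mul_le {a b : ℕ} (Q : Matrix (Fin a) (Fin a) ℝ)
    (hsym : Qᵀ = Q) (hid : Q * Q = Q) (B : Matrix (Fin a) (Fin b) ℝ) :
    spec (Q * B) ≤ spec B := by
  unfold spec
  rw [toEuclideanLin_mul]
  apply ContinuousLinearMap.opNorm_le_bound _ (norm_nonneg _)
  intro x
  calc ‖LinearMap.toContinuousLinearMap
        ((Matrix.toEuclideanLin Q).comp (Matrix.toEuclideanLin B)) x‖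
      = ‖Matrix.toEuclideanLin Q (Matrix.toEuclideanLin B x)‖ := rfl
    _ ≤ ‖Matrix.toEuclideanLin B x‖ := proj_norm_apply_le Q hsym hid _
    _ = ‖LinearMap.toContinuousLinearMap (Matrix.toEuclideanLin B) x‖ := rfl
    _ ≤ ‖LinearMap.toContinuousLinearMap (Matrix.toEuclideanLin B)‖ * ‖x‖ :=
        (LinearMap.toContinuousLinearMap (Matrix.toEuclideanLin B)).le_opNorm x

/-- ‖A − C M R‖₂ ≤ ‖(I − C C†) A‖₂ + ‖A (I − R† R)‖₂. -/
theorem cur_error_bound {m n k : ℕ}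
    (A : Matrix (Fin m) (Fin n) ℝ)
    (S : Matrix (Fin n) (Fin k) ℝ) (P : Matrix (Fin m) (Fin k) ℝ)
    (hS : IsSelection S) (hP : IsSelection P)
    (C : Matrix (Fin m) (Fin k) ℝ) (R : Matrix (Fin k) (Fin n) ℝ)
    (hC : C = A * S) (hR : R = Pᵀ * A)
    (Cp : Matrix (Fin k) (Fin m) ℝ) (Rp : Matrix (Fin n) (Fin k) ℝ)
    (hCp : IsMoorePenrose C Cp) (hRp : IsMoorePenrose R Rp)
    (M : Matrix (Fin k) (Fin k) ℝ) (hM : M = Cp * A * Rp) :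
    spec (A - C * M * R) ≤ spec ((1 - C * Cp) * A) + spec (A * (1 - Rp * R)) := by
  obtain ⟨h1, -, hQsym, -⟩ := hCp
  have hQid : (C * Cp) * (C * Cp) = C * Cp := by
    conv_lhs => rw [← Matrix.mul_assoc]
    rw [h1]
  have hdecomp : A - C * M * R =
      (1 - C * Cp) * A + (C * Cp) * (A * (1 - Rp * R)) := by
    subst hM
    simp only [Matrix.sub_mul, Matrix.mul_sub, Matrix.mul_one, Matrix.one_mul,
      Matrix.mul_assoc]
    abel
  rw [hdecomp]
  calc spec ((1 - C * Cp) * A + (C * Cp) * (A * (1 - Rp * R)))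
      ≤ spec ((1 - C * Cp) * A) + spec ((C * Cp) * (A * (1 - Rp * R))) :=
        spec_add_le _ _
    _ ≤ spec ((1 - C * Cp) * A) + spec (A * (1 - Rp * R)) := by
        have := spec_proj_mul_le (C * Cp) hQsym hQid (A * (1 - Rp * R))
        linarith
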